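/- Let f be a 2π-periodic function on ℝ that extends to a holomorphic function on the open strip {t ∈ ℂ : |Im t| < d'} for some d' > d, bounded uniformly by M on the closed strip {|Im t| ≤ d}. Then the error of the N-point periodic trapezoid rule, |∫₀^{2π} f(t) dt − (2π/N) ∑_{j=1}^{N} f(2πj/N)|, is bounded by C·M·e^{−dN} for some constant C independent of N and f (indeed one may take the error ≤ 4πM e^{−dN}/(1 − e^{−dN})). -/

import Mathlib

open Real MeasureTheory

lemma ptr_aux_shift (f : ℂ → ℂ) (d d' : ℝ) (hd : 0 < d) (hdd' : d < d')
    (hper : ∀ z : ℂ, f (z + 2 * Real.pi) = f z)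
    (hol : DifferentiableOn ℂ f {z : ℂ | |z.im| < d'})
    (k : ℤ) (σ : ℝ) (hσ : |σ| ≤ d) :
    (∫ x : ℝ in (0:ℝ)..2*π, f x * Complex.exp (-Complex.I * k * x))
      = ∫ x : ℝ in (0:ℝ)..2*π, f (x + σ * Complex.I)
          * Complex.exp (-Complex.I * k * (x + σ * Complex.I)) := by
  set g : ℂ → ℂ := fun z => f z * Complex.exp (-Complex.I * k * z) with hg
  have hsub : (Set.uIcc (0:ℂ).re (⟨2*π, σ⟩:ℂ).re ×ℂ Set.uIcc (0:ℂ).im (⟨2*π, σ⟩:ℂ).im)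
      ⊆ {z : ℂ | |z.im| < d'} := by
    intro z hz
    rw [Complex.mem_reProdIm] at hz
    have h2 : z.im ∈ Set.uIcc (0:ℝ) σ := hz.2
    have habs : |z.im| ≤ |σ| := by
      rcases le_total 0 σ with h | h
      · rw [Set.uIcc_of_le h] at h2
        rw [abs_of_nonneg h]
        exact abs_le.mpr ⟨by linarith [h2.1], h2.2⟩
      · rw [Set.uIcc_of_ge h] at h2
        rw [abs_of_nonpos h]
        exact abs_le.mpr ⟨by linarith [h2.1], by linarith [h2.2]⟩
    exact lt_of_le_of_lt (habs.trans hσ) hdd'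
  have hgd : DifferentiableOn ℂ g
      (Set.uIcc (0:ℂ).re (⟨2*π, σ⟩:ℂ).re ×ℂ Set.uIcc (0:ℂ).im (⟨2*π, σ⟩:ℂ).im) := by
    apply DifferentiableOn.mul (hol.mono hsub)
    exact (Differentiable.differentiableOn (by fun_prop))
  have h0 := Complex.integral_boundary_rect_eq_zero_of_differentiableOn g 0 ⟨2*π, σ⟩ hgd
  simp only [Complex.zero_re, Complex.zero_im] at h0
  have hvert : ∀ y : ℝ, g ((2*π:ℝ) + y * Complex.I) = g ((0:ℝ) + y * Complex.I) := by
    intro y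
    have h1 : f ((2*π:ℝ) + y * Complex.I) = f ((0:ℝ) + y * Complex.I) := by
      have := hper ((0:ℝ) + y * Complex.I)
      rw [← this]
      congr 1
      push_cast
      ring
    have h2 : Complex.exp (-Complex.I * k * ((2*π:ℝ) + y * Complex.I))
        = Complex.exp (-Complex.I * k * ((0:ℝ) + y * Complex.I)) := by
      have harg : (-Complex.I * (k:ℂ) * ((2*π:ℝ) + y * Complex.I))
          = -Complex.I * k * ((0:ℝ) + y * Complex.I) + ((-k : ℤ) : ℂ) * (2 * (π:ℂ) * Complex.I) := by
        push_cast
        ring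
      rw [harg, Complex.exp_add, Complex.exp_int_mul_two_pi_mul_I, mul_one]
    simp only [g]
    rw [h1, h2]
  have hveq : (∫ y : ℝ in (0:ℝ)..σ, g ((2*π:ℝ) + y * Complex.I))
      = ∫ y : ℝ in (0:ℝ)..σ, g ((0:ℝ) + y * Complex.I) := by
    apply intervalIntegral.integral_congr
    intro y _
    exact hvert y
  have hmain : (∫ x : ℝ in (0:ℝ)..2*π, g (x + ((0:ℝ):ℂ) * Complex.I))
      = ∫ x : ℝ in (0:ℝ)..2*π, g (x + σ * Complex.I) := by
    rw [hveq] at h0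
    linear_combination h0
  calc (∫ x : ℝ in (0:ℝ)..2*π, f x * Complex.exp (-Complex.I * k * x))
      = ∫ x : ℝ in (0:ℝ)..2*π, g (x + ((0:ℝ):ℂ) * Complex.I) := by
        apply intervalIntegral.integral_congr
        intro x _
        simp [g]
    _ = ∫ x : ℝ in (0:ℝ)..2*π, g (x + σ * Complex.I) := hmain
    _ = _ := rfl

theorem ptr_exponential_convergence
    (f : ℂ → ℂ) (d d' M : ℝ) (hd : 0 < d) (hdd' : d < d')
    (hper : ∀ z : ℂ, f (z + 2 * Real.pi) = f z)
    (hol : DifferentiableOn ℂ f {z : ℂ | |z.im| < d'})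
    (hbd : ∀ z : ℂ, |z.im| ≤ d → ‖f z‖ ≤ M)
    (N : ℕ) (hN : 0 < N) :
    ‖(∫ t in (0:ℝ)..(2 * Real.pi), f t)
        - (2 * Real.pi / N) * ∑ j ∈ Finset.range N, f (2 * Real.pi * (j + 1) / N)‖
      ≤ 4 * Real.pi * M * Real.exp (-d * N) / (1 - Real.exp (-d * N)) := by
  have hπ : (0:ℝ) < 2 * π := by positivity
  haveI : Fact (0 < 2 * π) := ⟨hπ⟩
  have hNR : (0:ℝ) < N := by exact_mod_cast hN
  set r : ℝ := Real.exp (-d * N) with hrdef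
  have hr0 : 0 < r := Real.exp_pos _
  have hr1 : r < 1 := by
    rw [hrdef, Real.exp_lt_one_iff]
    nlinarith
  have hM0 : 0 ≤ M := by
    have := hbd 0 (by simpa using hd.le)
    exact le_trans (norm_nonneg _) this
  -- continuity of f on reals
  have hop : IsOpen {z : ℂ | |z.im| < d'} := isOpen_lt (Complex.continuous_im.abs) continuous_const
  have hmem : ∀ x : ℝ, ((x:ℂ) ∈ {z : ℂ | |z.im| < d'}) := by
    intro x; simp only [Set.mem_setOf_eq, Complex.ofReal_im, abs_zero]; linarith
  have hcf : Continuous fun t : ℝ => f t := by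
    apply continuous_iff_continuousAt.mpr
    intro x
    exact ((hol.differentiableAt (hop.mem_nhds (hmem x))).continuousAt).comp
      Complex.continuous_ofReal.continuousAt
  have hper' : Function.Periodic (fun t : ℝ => f t) (2 * π) := by
    intro t
    have h := hper t
    show f ((t + 2*π : ℝ) : ℂ) = f t
    rw [show ((t + 2*π : ℝ) : ℂ) = (t : ℂ) + 2 * (π:ℂ) by push_cast; ring]
    exact h
  -- the lifted continuous map on AddCircle (2π)
  set G : AddCircle (2 * π) → ℂ := hper'.lift with hGdef
  have hGcont : Continuous G := Continuous.quotient_liftOn' hcf _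
  have hGcoe : ∀ x : ℝ, G (x : AddCircle (2 * π)) = f x := fun x => hper'.lift_coe x
  set Gc : C(AddCircle (2 * π), ℂ) := ⟨G, hGcont⟩ with hGc
  set c : ℤ → ℂ := fourierCoeff (⇑Gc) with hc
  -- fourier coefficient as explicit integral
  have hcoeff_int : ∀ k : ℤ, c k
      = (1/(2*π) : ℝ) • ∫ x in (0:ℝ)..2*π, f x * Complex.exp (-Complex.I * k * x) := by
    intro k
    rw [hc, fourierCoeff_eq_intervalIntegral (⇑Gc) k 0]
    rw [zero_add]
    congr 1
    apply intervalIntegral.integral_congr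
    intro x _
    have h1 : Gc ((x : ℝ) : AddCircle (2*π)) = f x := hGcoe x
    have h2 : (fourier (-k) ((x : ℝ) : AddCircle (2*π)) : ℂ)
        = Complex.exp (-Complex.I * k * x) := by
      rw [fourier_coe_apply]
      congr 1
      have hpi : (π:ℂ) ≠ 0 := by exact_mod_cast Real.pi_ne_zero
      field_simp
      push_cast
      ring
    show (fourier (-k)) ((x : ℝ) : AddCircle (2*π)) • Gc ((x : ℝ) : AddCircle (2*π)) = _
    rw [smul_eq_mul, h1, h2, mul_comm]
  -- coefficient decay
  have hcoeff : ∀ k : ℤ, ‖c k‖ ≤ M * Real.exp (-d * |(k:ℝ)|) := by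
    intro k
    set σ : ℝ := if 0 ≤ k then -d else d with hσdef
    have hσabs : |σ| ≤ d := by
      rcases le_or_gt 0 k with h|h
      · simp [hσdef, h, abs_of_pos hd]
      · simp [hσdef, not_le.mpr h, abs_of_pos hd]
    have hkσ : (k:ℝ) * σ = -d * |(k:ℝ)| := by
      rcases le_or_gt 0 k with h|h
      · have hk' : (0:ℝ) ≤ (k:ℝ) := by exact_mod_cast h
        simp only [hσdef, if_pos h, abs_of_nonneg hk']
        ring
      · have hk' : (k:ℝ) < 0 := by exact_mod_cast h
        simp only [hσdef, if_neg (not_le.mpr h), abs_of_neg hk']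
        ring
    rw [hcoeff_int k, ptr_aux_shift f d d' hd hdd' hper hol k σ hσabs]
    have hbound : ∀ x ∈ Set.uIoc (0:ℝ) (2*π),
        ‖f (x + σ * Complex.I) * Complex.exp (-Complex.I * k * (x + σ * Complex.I))‖
          ≤ M * Real.exp (-d * |(k:ℝ)|) := by
      intro x _
      rw [norm_mul]
      have h1 : ‖f ((x:ℂ) + σ * Complex.I)‖ ≤ M := by
        apply hbd
        simp only [Complex.add_im, Complex.ofReal_im, Complex.mul_im, Complex.ofReal_re,
          Complex.I_im, Complex.I_re, mul_zero, mul_one, zero_add, add_zero]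
        exact hσabs
      have h2 : ‖Complex.exp (-Complex.I * k * ((x:ℂ) + σ * Complex.I))‖
          = Real.exp (-d * |(k:ℝ)|) := by
        have harg : -Complex.I * (k:ℂ) * ((x:ℂ) + σ * Complex.I)
            = Complex.ofReal ((k:ℝ) * σ) + Complex.ofReal (-((k:ℝ) * x)) * Complex.I := by
          push_cast
          ring_nf
          rw [Complex.I_sq]
          ring
        rw [harg, Complex.norm_exp]
        congr 1
        rw [← hkσ]
        simp [Complex.add_re]
      rw [h2]
      exact mul_le_mul_of_nonneg_right h1 (Real.exp_nonneg _)
    have hI := intervalIntegral.norm_integral_le_of_norm_le_const hbound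
    rw [norm_smul]
    calc ‖(1/(2*π) : ℝ)‖ * ‖∫ x in (0:ℝ)..2*π, f (x + σ * Complex.I)
            * Complex.exp (-Complex.I * k * (x + σ * Complex.I))‖
        ≤ ‖(1/(2*π) : ℝ)‖ * (M * Real.exp (-d * |(k:ℝ)|) * |2*π - 0|) := by
          exact mul_le_mul_of_nonneg_left hI (norm_nonneg _)
      _ = M * Real.exp (-d * |(k:ℝ)|) := by
          rw [Real.norm_eq_abs, abs_of_pos (by positivity : (0:ℝ) < 1/(2*π)),
            abs_of_pos (by linarith : (0:ℝ) < 2*π - 0)]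
          field_simp
          ring
  -- summability of the majorant
  have hgeo : Real.exp (-d) < 1 := by rw [Real.exp_lt_one_iff]; linarith
  have hmaj : Summable (fun k : ℤ => M * Real.exp (-d * |(k:ℝ)|)) := by
    apply Summable.of_nat_of_neg_add_one
    · have he : (fun n : ℕ => M * Real.exp (-d * |(((n:ℤ)):ℝ)|))
          = fun n : ℕ => M * (Real.exp (-d))^n := by
        funext n
        have h1 : |(((n:ℤ)):ℝ)| = (n:ℝ) := by
          push_cast
          exact abs_of_nonneg (Nat.cast_nonneg n)
        rw [h1, show -d * (n:ℝ) = (n:ℝ) * (-d) by ring, Real.exp_nat_mul]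
      rw [he]
      exact (summable_geometric_of_lt_one (Real.exp_nonneg _) hgeo).mul_left M
    · have he : (fun n : ℕ => M * Real.exp (-d * |(((-(n+1):ℤ)):ℝ)|))
          = fun n : ℕ => (M * Real.exp (-d)) * (Real.exp (-d))^n := by
        funext n
        have h1 : |(((-(n+1):ℤ)):ℝ)| = (n:ℝ) + 1 := by
          push_cast
          rw [abs_neg, abs_of_nonneg (by positivity)]
        rw [h1, show -d * ((n:ℝ)+1) = ((n:ℝ)+1) * (-d) by ring]
        rw [show ((n:ℝ)+1) = ((n+1 : ℕ) : ℝ) by push_cast; ring, Real.exp_nat_mul, pow_succ]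
        ring
      rw [he]
      exact (summable_geometric_of_lt_one (Real.exp_nonneg _) hgeo).mul_left _
  have hsummc : Summable c :=
    Summable.of_norm_bounded hmaj (fun k => by exact hcoeff k)
  -- pointwise Fourier expansion
  have hpi : (π:ℂ) ≠ 0 := by exact_mod_cast Real.pi_ne_zero
  have hNc : (N:ℂ) ≠ 0 := Nat.cast_ne_zero.mpr hN.ne'
  have hpt : ∀ t : ℝ, HasSum (fun k : ℤ => c k * Complex.exp (Complex.I * k * t)) (f t) := by
    intro t
    have h := has_pointwise_sum_fourier_series_of_summable (f := Gc) hsummc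
      ((t : ℝ) : AddCircle (2*π))
    have h2 : (fun k : ℤ => c k * Complex.exp (Complex.I * k * t))
        = fun k : ℤ => fourierCoeff (⇑Gc) k • fourier k ((t : ℝ) : AddCircle (2*π)) := by
      funext k
      rw [smul_eq_mul, hc]
      congr 1
      rw [fourier_coe_apply]
      congr 1
      field_simp
      push_cast
      ring
    rw [show f (t:ℂ) = Gc ((t : ℝ) : AddCircle (2*π)) from (hGcoe t).symm, h2]
    exact h
  -- geometric sums
  have hS : ∀ k : ℤ, (∑ j ∈ Finset.range N, Complex.exp (Complex.I * k * ((2*π*(j+1)/N : ℝ) : ℂ)))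
      = if (N:ℤ) ∣ k then (N:ℂ) else 0 := by
    intro k
    set ω : ℂ := Complex.exp (2*π*Complex.I*k/N) with hω
    have hterm : ∀ j : ℕ, Complex.exp (Complex.I * k * ((2*π*(j+1)/N : ℝ) : ℂ)) = ω^(j+1) := by
      intro j
      rw [hω, ← Complex.exp_nat_mul]
      congr 1
      push_cast
      field_simp
    simp_rw [hterm]
    have hωN : ω^N = 1 := by
      rw [hω, ← Complex.exp_nat_mul]
      rw [show (N:ℂ) * (2*π*Complex.I*k/N) = (k:ℂ) * (2*(π:ℂ)*Complex.I) by field_simp]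
      exact_mod_cast Complex.exp_int_mul_two_pi_mul_I k
    by_cases hdvd : (N:ℤ) ∣ k
    · obtain ⟨m, hm⟩ := hdvd
      have hω1 : ω = 1 := by
        rw [hω, hm]
        push_cast
        rw [show (2*(π:ℂ)*Complex.I*((N:ℂ)*(m:ℂ))/(N:ℂ)) = (m:ℂ)*(2*(π:ℂ)*Complex.I) by
          field_simp]
        exact_mod_cast Complex.exp_int_mul_two_pi_mul_I m
      simp only [hω1, one_pow]
      rw [if_pos ⟨m, hm⟩]
      simp
    · have hπI : (2*(π:ℂ)*Complex.I) ≠ 0 := by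
        simp [Complex.I_ne_zero, hpi]
      have hω1 : ω ≠ 1 := by
        intro hcon
        rw [hω, Complex.exp_eq_one_iff] at hcon
        obtain ⟨n, hn⟩ := hcon
        apply hdvd
        have h2 : (2*(π:ℂ)*Complex.I) * (k:ℂ) = (2*(π:ℂ)*Complex.I) * ((n:ℂ) * (N:ℂ)) := by
          field_simp at hn
          linear_combination (2*(π:ℂ)*Complex.I) * hn
        have hk := mul_left_cancel₀ hπI h2
        have hk2 : (k:ℂ) = (N:ℂ) * n := by rw [hk]; ring
        exact ⟨n, by exact_mod_cast hk2⟩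
      have hstep : ∑ j ∈ Finset.range N, ω^(j+1) = ω * ∑ j ∈ Finset.range N, ω^j := by
        rw [Finset.mul_sum]
        apply Finset.sum_congr rfl
        intro j _
        ring
      rw [hstep, geom_sum_eq hω1, hωN]
      simp [hdvd]
  -- the aliasing series
  set S : ℂ := ∑ j ∈ Finset.range N, f ((2*π*(j+1)/N : ℝ) : ℂ) with hSdef
  set P : ℤ → ℂ := fun k => (2*(π:ℂ)/N) * (c k * (if (N:ℤ) ∣ k then (N:ℂ) else 0)) with hPdef
  have hsum1 : HasSum (fun k : ℤ => ∑ j ∈ Finset.range N,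
      c k * Complex.exp (Complex.I * k * ((2*π*(j+1)/N : ℝ) : ℂ))) S :=
    hasSum_sum (fun j _ => hpt (2*π*(j+1)/N))
  have hsum2 : HasSum P ((2*(π:ℂ)/N) * S) := by
    apply HasSum.mul_left
    have hfe : (fun k : ℤ => c k * (if (N:ℤ) ∣ k then (N:ℂ) else 0)) = fun k : ℤ =>
        ∑ j ∈ Finset.range N, c k * Complex.exp (Complex.I * k * ((2*π*(j+1)/N : ℝ) : ℂ)) := by
      funext k
      rw [← hS k, Finset.mul_sum]
    show HasSum (fun k : ℤ => c k * (if (N:ℤ) ∣ k then (N:ℂ) else 0)) S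
    rw [hfe]
    exact hsum1
  -- the integral is 2π c₀
  have hint : (∫ t in (0:ℝ)..(2*π), f t) = 2*(π:ℂ) * c 0 := by
    have h0 := hcoeff_int 0
    have h1 : (∫ x in (0:ℝ)..2*π, f x * Complex.exp (-Complex.I * ((0:ℤ):ℂ) * x))
        = ∫ t in (0:ℝ)..(2*π), f t := by
      apply intervalIntegral.integral_congr
      intro x _
      simp
    rw [h1] at h0
    rw [h0, Complex.real_smul]
    push_cast
    field_simp
  have hP0 : P 0 = ∫ t in (0:ℝ)..(2*π), f t := by
    rw [hPdef]
    simp only [if_pos (dvd_zero ((N:ℤ)))]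
    rw [hint]
    field_simp
  -- bound the tail
  set h : ℤ → ℝ := fun k => if k = 0 then 0 else
      if (N:ℤ) ∣ k then 2*π*M*Real.exp (-d * |(k:ℝ)|) else 0 with hh
  have hptw : ∀ k : ℤ, ‖Function.update P 0 0 k‖ ≤ h k := by
    intro k
    by_cases hk : k = 0
    · subst hk
      simp [Function.update_self, hh]
    · rw [Function.update_of_ne hk, hh]
      simp only [if_neg hk]
      by_cases hdvd : (N:ℤ) ∣ k
      · rw [if_pos hdvd]
        have hPk : P k = ((2*π : ℝ) : ℂ) * c k := by
          rw [hPdef]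
          simp only [if_pos hdvd]
          push_cast
          field_simp
        rw [hPk, norm_mul, Complex.norm_real, Real.norm_eq_abs, abs_of_pos hπ]
        calc (2*π) * ‖c k‖ ≤ (2*π) * (M * Real.exp (-d * |(k:ℝ)|)) := by
              apply mul_le_mul_of_nonneg_left _ hπ.le
              exact hcoeff k
          _ = 2*π*M*Real.exp (-d * |(k:ℝ)|) := by ring
      · rw [if_neg hdvd]
        have hPk : P k = 0 := by
          rw [hPdef]
          simp [if_neg hdvd]
        simp [hPk]
  -- the majorant sums to the RHS
  have h1r : (0:ℝ) < 1 - r := by linarith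
  have hhsum : HasSum h (4*π*M*r/(1-r)) := by
    set q : ℤ → ℝ := fun m => if m = 0 then (0:ℝ) else 2*π*M * r^(m.natAbs) with hqdef
    have hq : HasSum q (4*π*M*r/(1-r)) := by
      have hpos : HasSum (fun n : ℕ => q ((n:ℤ)))
          (2*π*M*r/(1-r)) := by
        show HasSum (fun n : ℕ => if ((n:ℤ)) = 0 then (0:ℝ) else 2*π*M * r^(((n:ℤ)).natAbs)) _
        have hg := (hasSum_geometric_of_lt_one hr0.le hr1).mul_left (2*π*M)
        have hu := hg.update 0 0
        have hfun : Function.update (fun n : ℕ => 2*π*M * r^n) 0 0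
            = fun n : ℕ => if ((n:ℤ)) = 0 then (0:ℝ) else 2*π*M * r^(((n:ℤ)).natAbs) := by
          funext n
          cases n with
          | zero => simp
          | succ m =>
            rw [Function.update_of_ne (Nat.succ_ne_zero m)]
            have : ((((m+1:ℕ)):ℤ)) ≠ 0 := by exact_mod_cast Nat.succ_ne_zero m
            rw [if_neg this]
            congr 1
        rw [hfun] at hu
        have hval : (0:ℝ) - 2*π*M*r^0 + 2*π*M*(1-r)⁻¹ = 2*π*M*r/(1-r) := by
          rw [pow_zero, mul_one, eq_div_iff h1r.ne']
          field_simp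
          ring
        rw [hval] at hu
        exact hu
      have hneg : HasSum (fun n : ℕ => q (-((n:ℤ)+1))) (2*π*M*r/(1-r)) := by
        show HasSum (fun n : ℕ => if (-((n:ℤ)+1)) = 0 then (0:ℝ)
          else 2*π*M * r^((-((n:ℤ)+1)).natAbs)) _
        have hg := (hasSum_geometric_of_lt_one hr0.le hr1).mul_left (2*π*M*r)
        have hfun : (fun n : ℕ => (2*π*M*r) * r^n)
            = fun n : ℕ => if (-((n:ℤ)+1)) = 0 then (0:ℝ) else 2*π*M * r^((-((n:ℤ)+1)).natAbs) := by
          funext n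
          have hne : (-((n:ℤ)+1)) ≠ 0 := by omega
          rw [if_neg hne]
          have hab : (-((n:ℤ)+1)).natAbs = n+1 := by omega
          rw [hab, pow_succ]
          ring
        rw [hfun] at hg
        rw [show 2*π*M*r/(1-r) = (2*π*M*r) * (1-r)⁻¹ from div_eq_mul_inv _ _]
        exact hg
      have htot := HasSum.of_nat_of_neg_add_one (f := q) hpos hneg
      rw [show (4:ℝ)*π*M*r/(1-r) = 2*π*M*r/(1-r) + 2*π*M*r/(1-r) by ring]
      exact htot
    have hNZ : ((N:ℤ)) ≠ 0 := by exact_mod_cast hN.ne'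
    have hinj : Function.Injective (fun m : ℤ => (N:ℤ) * m) := fun a b hab =>
      mul_left_cancel₀ hNZ hab
    have hvanish : ∀ x : ℤ, x ∉ Set.range (fun m : ℤ => (N:ℤ)*m) → h x = 0 := by
      intro x hx
      simp only [hh]
      by_cases h0 : x = 0
      · exact absurd ⟨0, by simp [h0]⟩ hx
      · rw [if_neg h0]
        by_cases hdvd : (N:ℤ) ∣ x
        · obtain ⟨m, hm⟩ := hdvd
          exact absurd ⟨m, hm.symm⟩ hx
        · rw [if_neg hdvd]
    rw [← hinj.hasSum_iff hvanish]
    have hcomp : (h ∘ fun m : ℤ => (N:ℤ)*m) = q := by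
      funext m
      show h ((N:ℤ) * m) = q m
      simp only [hh, hqdef]
      by_cases hm : m = 0
      · simp [hm]
      · have hNm : ((N:ℤ)) * m ≠ 0 := mul_ne_zero hNZ hm
        rw [if_neg hNm, if_pos ⟨m, rfl⟩, if_neg hm]
        congr 1
        have habs : |(((((N:ℤ)) * m :ℤ)):ℝ)| = (N:ℝ) * (m.natAbs : ℝ) := by
          push_cast
          rw [abs_mul, abs_of_pos hNR, Nat.cast_natAbs]
          push_cast
          ring
        rw [habs, show -d * ((N:ℝ) * (m.natAbs : ℝ)) = (m.natAbs : ℝ) * (-d * N) by ring,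
          Real.exp_nat_mul]
    rw [hcomp]
    exact hq
  -- assemble
  have hsumh : Summable h := hhsum.summable
  have hsumupd : Summable (fun k => ‖Function.update P 0 0 k‖) :=
    Summable.of_nonneg_of_le (fun k => norm_nonneg _) hptw hsumh
  have hupd := hsum2.update 0 0
  have hbound2 : ‖(0:ℂ) - P 0 + (2*(π:ℂ)/N) * S‖ ≤ 4*π*M*r/(1-r) := by
    rw [← hupd.tsum_eq]
    calc ‖∑' k, Function.update P 0 0 k‖
        ≤ ∑' k, ‖Function.update P 0 0 k‖ := norm_tsum_le_tsum_norm hsumupd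
      _ ≤ ∑' k, h k := Summable.tsum_le_tsum hptw hsumupd hsumh
      _ = 4*π*M*r/(1-r) := hhsum.tsum_eq
  have hSgoal : (∑ j ∈ Finset.range N, f (2 * (Real.pi:ℂ) * ((j:ℂ) + 1) / (N:ℂ))) = S := by
    rw [hSdef]
    apply Finset.sum_congr rfl
    intro j _
    congr 1
    push_cast
    ring
  have hrw : (∫ t in (0:ℝ)..(2 * Real.pi), f t)
      - (2 * (Real.pi:ℂ) / (N:ℂ)) * ∑ j ∈ Finset.range N, f (2 * (Real.pi:ℂ) * ((j:ℂ) + 1) / (N:ℂ))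
      = -((0:ℂ) - P 0 + (2*(π:ℂ)/N) * S) := by
    rw [hSgoal, hP0]
    ring
  rw [hrw, norm_neg]
  exact hbound2
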